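/- Let p ∈ ℂ[X] be a Shabat polynomial of degree n ≥ 2 whose coefficient of Xⁿ⁻¹ is zero. Then the sum of the distinct complex roots of p − 1 equals the negative of the sum of the distinct complex roots of p + 1. -/

import Mathlib

open Polynomial

/-- Sum of roots (with multiplicity) of a complex polynomial with vanishing
subleading coefficient is zero. -/
lemma sum_roots_eq_zero_of_coeff (q : Polynomial ℂ) (hq : q ≠ 0)
    (hpos : 0 < q.natDegree) (h : q.coeff (q.natDegree - 1) = 0) :
    q.roots.sum = 0 := by
  have hc : q.leadingCoeff ≠ 0 := leadingCoeff_ne_zero.mpr hq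
  have hcinv : (q.leadingCoeff)⁻¹ ≠ 0 := inv_ne_zero hc
  set m : Polynomial ℂ := C (q.leadingCoeff)⁻¹ * q with hm
  have hmon : m.Monic := by
    have := monic_mul_leadingCoeff_inv (p := q) hq
    rwa [mul_comm] at this
  have hroots : m.roots = q.roots := roots_C_mul q hcinv
  have hnd : m.natDegree = q.natDegree := by
    rw [hm, natDegree_C_mul hcinv]
  have hsum := Splits.nextCoeff_eq_neg_sum_roots_of_monic
    (IsAlgClosed.splits m) hmon
  rw [hroots] at hsum
  have hnext : m.nextCoeff = 0 := by
    rw [nextCoeff_of_natDegree_pos (hnd ▸ hpos), hnd, hm, coeff_C_mul, h, mul_zero]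
  rw [hnext] at hsum
  exact neg_eq_zero.mp hsum.symm

/-- If a Shabat polynomial `p` of degree `n ≥ 2` has vanishing coefficient of
`X^(n-1)`, then the sum of the distinct complex roots of `p - 1` equals the negative
of the sum of the distinct complex roots of `p + 1`. -/
theorem shabat_sum_white_eq_neg_sum_black
    (p : Polynomial ℂ) (n : ℕ) (hn : 2 ≤ n) (hdeg : p.natDegree = n)
    (hShabat : ∀ z : ℂ, (Polynomial.derivative p).eval z = 0 →
      p.eval z = 1 ∨ p.eval z = -1)
    (hcoeff : p.coeff (n - 1) = 0) :
    ((p - 1).roots.toFinset.sum id) = -((p + 1).roots.toFinset.sum id) := by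
  classical
  have hA0 : p - 1 ≠ 0 := by
    intro h
    have : p = 1 := by linear_combination (norm := ring_nf) h
    rw [this] at hdeg; simp [natDegree_one] at hdeg; omega
  have hB0 : p + 1 ≠ 0 := by
    intro h
    have : p = -1 := by linear_combination (norm := ring_nf) h
    rw [this] at hdeg; simp at hdeg; omega
  have hAdeg : (p - 1).natDegree = n := by
    have : p - 1 = p + C (-1) := by simp [sub_eq_add_neg]
    rw [this, natDegree_add_C, hdeg]
  have hBdeg : (p + 1).natDegree = n := by
    have : p + 1 = p + C 1 := by simp
    rw [this, natDegree_add_C, hdeg]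
  have hD0 : derivative p ≠ 0 := by
    intro h
    have := natDegree_eq_zero_of_derivative_eq_zero h
    omega
  have hDdeg : (derivative p).natDegree = n - 1 := by
    have := degree_derivative_eq p (by omega : 0 < p.natDegree)
    rw [hdeg] at this
    exact natDegree_eq_of_degree_eq_some this
  set A := (p - 1).roots with hA
  set B := (p + 1).roots with hB
  set D := (derivative p).roots with hD
  -- multiset identity
  have key : D + A.dedup + B.dedup = A + B := by
    ext z
    simp only [Multiset.count_add, Multiset.count_dedup]
    by_cases h1 : p.eval z = 1
    · have hzA : (p - 1).IsRoot z := by simp [IsRoot, h1]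
      have hzB : ¬ (p + 1).IsRoot z := by simp [IsRoot, h1]
      have hmem : z ∈ A := by rw [hA, mem_roots hA0]; exact hzA
      have hnmem : z ∉ B := by rw [hB, mem_roots hB0]; exact hzB
      have hcA : A.count z = (p - 1).rootMultiplicity z := by
        rw [hA, count_roots]
      have hcB : B.count z = 0 := Multiset.count_eq_zero.mpr hnmem
      have hder : derivative (p - 1) = derivative p := by simp
      have hcD : D.count z = (p - 1).rootMultiplicity z - 1 := by
        rw [hD, count_roots, ← hder, derivative_rootMultiplicity_of_root hzA]
      have hpos : 1 ≤ (p - 1).rootMultiplicity z :=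
        (rootMultiplicity_pos hA0).mpr hzA
      rw [if_pos hmem, if_neg hnmem, hcA, hcB, hcD]
      omega
    · by_cases h2 : p.eval z = -1
      · have hzB : (p + 1).IsRoot z := by simp [IsRoot, h2]
        have hzA : ¬ (p - 1).IsRoot z := by simp [IsRoot, h2]; norm_num
        have hmem : z ∈ B := by rw [hB, mem_roots hB0]; exact hzB
        have hnmem : z ∉ A := by rw [hA, mem_roots hA0]; exact hzA
        have hcB : B.count z = (p + 1).rootMultiplicity z := by
          rw [hB, count_roots]
        have hcA : A.count z = 0 := Multiset.count_eq_zero.mpr hnmem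
        have hder : derivative (p + 1) = derivative p := by simp
        have hcD : D.count z = (p + 1).rootMultiplicity z - 1 := by
          rw [hD, count_roots, ← hder, derivative_rootMultiplicity_of_root hzB]
        have hpos : 1 ≤ (p + 1).rootMultiplicity z :=
          (rootMultiplicity_pos hB0).mpr hzB
        rw [if_pos hmem, if_neg hnmem, hcA, hcB, hcD]
        omega
      · have hd : (derivative p).eval z ≠ 0 := by
          intro h; rcases hShabat z h with h' | h' <;> [exact h1 h'; exact h2 h']
        have hnA : z ∉ A := by
          rw [hA, mem_roots hA0]
          simp only [IsRoot, eval_sub, eval_one, sub_eq_zero]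
          exact h1
        have hnB : z ∉ B := by
          rw [hB, mem_roots hB0]
          simp only [IsRoot, eval_add, eval_one]
          intro h; apply h2; linear_combination h
        have hnD : z ∉ D := by
          rw [hD, mem_roots hD0]; exact hd
        simp [Multiset.count_eq_zero.mpr hnA, Multiset.count_eq_zero.mpr hnB,
          Multiset.count_eq_zero.mpr hnD, hnA, hnB]
  -- sums of roots with multiplicity vanish
  have hsA : A.sum = 0 := by
    apply sum_roots_eq_zero_of_coeff _ hA0 (by rw [hAdeg]; omega)
    rw [hAdeg, coeff_sub, coeff_one, if_neg (by omega : ¬ (n - 1 = 0)), hcoeff, sub_zero]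
  have hsB : B.sum = 0 := by
    apply sum_roots_eq_zero_of_coeff _ hB0 (by rw [hBdeg]; omega)
    rw [hBdeg, coeff_add, coeff_one, if_neg (by omega : ¬ (n - 1 = 0)), hcoeff, add_zero]
  have hsD : D.sum = 0 := by
    apply sum_roots_eq_zero_of_coeff _ hD0 (by rw [hDdeg]; omega)
    rw [hDdeg, coeff_derivative]
    have : n - 1 - 1 + 1 = n - 1 := by omega
    rw [this, hcoeff, zero_mul]
  have hsum := congrArg Multiset.sum key
  simp only [Multiset.sum_add, hsA, hsB, hsD, zero_add, add_zero] at hsum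
  have hfin : ∀ s : Multiset ℂ, s.toFinset.sum id = s.dedup.sum := by
    intro s
    rw [Finset.sum, Multiset.toFinset_val, Multiset.map_id]
  rw [hfin, hfin]
  linear_combination hsum
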